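/- In every 2-page book embedding of the double ladder of length ℓ, there is no index i ∈ {0,…,ℓ−1} such that both u_i < v_i < w_i and u_{i+1} < v_{i+1} < w_{i+1} hold in the spine order, and there is no index i ∈ {0,…,ℓ−1} such that both w_i < v_i < u_i and w_{i+1} < v_{i+1} < u_{i+1} hold in the spine order. -/
import Mathlib


/-- A 2-page book embedding of the DAG on vertex type `V` with edge relation `E`:
a spine position function (an injective topological order) together with an
assignment of edges to two pages such that no two same-page edges cross. -/
structure TwoPageEmbedding (V : Type*) (E : V → V → Prop) where
  pos : V → ℕ
  pos_inj : Function.Injective pos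
  topo : ∀ ⦃a b : V⦄, E a b → pos a < pos b
  page : V → V → Bool
  no_cross : ∀ a b c d : V, E a b → E c d → page a b = page c d →
    ¬ (pos a < pos c ∧ pos c < pos b ∧ pos b < pos d)

/-- `a` and `b` occupy consecutive spine positions, with `a` before `b`. -/
def TwoPageEmbedding.Consec {V : Type*} {E : V → V → Prop}
    (emb : TwoPageEmbedding V E) (a b : V) : Prop :=
  emb.pos a < emb.pos b ∧
    ∀ x : V, ¬ (emb.pos a < emb.pos x ∧ emb.pos x < emb.pos b)

/-- `a` and `b` are spine-consecutive: no vertex lies strictly between them. -/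
def TwoPageEmbedding.SpineConsec {V : Type*} {E : V → V → Prop}
    (emb : TwoPageEmbedding V E) (a b : V) : Prop :=
  (∀ x : V, ¬ (emb.pos a < emb.pos x ∧ emb.pos x < emb.pos b)) ∧
  (∀ x : V, ¬ (emb.pos b < emb.pos x ∧ emb.pos x < emb.pos a))

/-- Names of the vertices of a double ladder. -/
inductive DLV : Type
  | s1 | s2 | t1 | t2
  | u (i : ℕ) | v (i : ℕ) | w (i : ℕ)

/-- Validity of a vertex name for the double ladder of length `ℓ`. -/
def DLV.valid (ℓ : ℕ) : DLV → Prop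
  | .u i => i ≤ ℓ
  | .v i => i ≤ ℓ
  | .w i => i ≤ ℓ
  | _ => True

/-- The vertex set of the double ladder of length `ℓ`. -/
def DLVert (ℓ : ℕ) : Type := {x : DLV // DLV.valid ℓ x}

def DLs1 (ℓ : ℕ) : DLVert ℓ := ⟨DLV.s1, trivial⟩
def DLs2 (ℓ : ℕ) : DLVert ℓ := ⟨DLV.s2, trivial⟩
def DLt1 (ℓ : ℕ) : DLVert ℓ := ⟨DLV.t1, trivial⟩
def DLt2 (ℓ : ℕ) : DLVert ℓ := ⟨DLV.t2, trivial⟩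
def DLu (ℓ i : ℕ) (h : i ≤ ℓ) : DLVert ℓ := ⟨DLV.u i, h⟩
def DLv (ℓ i : ℕ) (h : i ≤ ℓ) : DLVert ℓ := ⟨DLV.v i, h⟩
def DLw (ℓ i : ℕ) (h : i ≤ ℓ) : DLVert ℓ := ⟨DLV.w i, h⟩

/-- The edges of the double ladder of length `ℓ` (on vertex names). -/
inductive DLEdgeV (ℓ : ℕ) : DLV → DLV → Prop
  | s1u : DLEdgeV ℓ .s1 (.u 0)
  | s1v : DLEdgeV ℓ .s1 (.v 0)
  | s2v : DLEdgeV ℓ .s2 (.v 0)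
  | s2w : DLEdgeV ℓ .s2 (.w 0)
  | ut1 : DLEdgeV ℓ (.u ℓ) .t1
  | vt1 : DLEdgeV ℓ (.v ℓ) .t1
  | vt2 : DLEdgeV ℓ (.v ℓ) .t2
  | wt2 : DLEdgeV ℓ (.w ℓ) .t2
  | uu {i : ℕ} : i < ℓ → DLEdgeV ℓ (.u i) (.u (i + 1))
  | vu {i : ℕ} : i < ℓ → DLEdgeV ℓ (.v i) (.u (i + 1))
  | vv {i : ℕ} : i < ℓ → DLEdgeV ℓ (.v i) (.v (i + 1))
  | wv {i : ℕ} : i < ℓ → DLEdgeV ℓ (.w i) (.v (i + 1))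
  | ww {i : ℕ} : i < ℓ → DLEdgeV ℓ (.w i) (.w (i + 1))

/-- The edge relation of the double ladder of length `ℓ`. -/
def DLEdge (ℓ : ℕ) (a b : DLVert ℓ) : Prop := DLEdgeV ℓ a.val b.val

/-- Every vertex of the `i`-th triple precedes every vertex of the `j`-th triple
in the spine order of `emb`. -/
def TripleBefore {ℓ : ℕ} (emb : TwoPageEmbedding (DLVert ℓ) (DLEdge ℓ))
    (i j : ℕ) : Prop :=
  ∀ x y : DLVert ℓ,
    (x.val = DLV.u i ∨ x.val = DLV.v i ∨ x.val = DLV.w i) →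
    (y.val = DLV.u j ∨ y.val = DLV.v j ∨ y.val = DLV.w j) →
    emb.pos x < emb.pos y


section Aux

private lemma bool3 {a b c : Bool} (h1 : a ≠ b) (h2 : b ≠ c) (h3 : a ≠ c) : False := by
  cases a <;> cases b <;> cases c <;>
    first | exact absurd rfl h1 | exact absurd rfl h2 | exact absurd rfl h3

private lemma bool5 {a b c d e : Bool} (h1 : a ≠ b) (h2 : b ≠ c) (h3 : c ≠ d)
    (h4 : d ≠ e) (h5 : e ≠ a) : False := by
  cases a <;> cases b <;> cases c <;> cases d <;> cases e <;>
    first | exact absurd rfl h1 | exact absurd rfl h2 | exact absurd rfl h3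
          | exact absurd rfl h4 | exact absurd rfl h5

private lemma cross_ne {V : Type*} {E : V → V → Prop} (emb : TwoPageEmbedding V E)
    {a b c d : V} (hab : E a b) (hcd : E c d)
    (h1 : emb.pos a < emb.pos c) (h2 : emb.pos c < emb.pos b)
    (h3 : emb.pos b < emb.pos d) : emb.page a b ≠ emb.page c d :=
  fun hp => emb.no_cross a b c d hab hcd hp ⟨h1, h2, h3⟩

private lemma pos_ne {ℓ : ℕ} (emb : TwoPageEmbedding (DLVert ℓ) (DLEdge ℓ))
    {a b : DLVert ℓ} (h : a.val ≠ b.val) : emb.pos a ≠ emb.pos b :=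
  fun hh => h (congrArg Subtype.val (emb.pos_inj hh))

/-- common in-neighbor of `v i` and `w i` -/
private lemma exists_P (ℓ i : ℕ) (h : i ≤ ℓ) :
    ∃ p : DLVert ℓ, DLEdge ℓ p (DLv ℓ i h) ∧ DLEdge ℓ p (DLw ℓ i h) := by
  match i with
  | 0 => exact ⟨DLs2 ℓ, DLEdgeV.s2v, DLEdgeV.s2w⟩
  | k + 1 =>
    exact ⟨DLw ℓ k (Nat.le_of_succ_le h), DLEdgeV.wv h, DLEdgeV.ww h⟩

/-- common in-neighbor of `u i` and `v i` -/
private lemma exists_P' (ℓ i : ℕ) (h : i ≤ ℓ) :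
    ∃ p : DLVert ℓ, DLEdge ℓ p (DLu ℓ i h) ∧ DLEdge ℓ p (DLv ℓ i h) := by
  match i with
  | 0 => exact ⟨DLs1 ℓ, DLEdgeV.s1u, DLEdgeV.s1v⟩
  | k + 1 =>
    exact ⟨DLv ℓ k (Nat.le_of_succ_le h), DLEdgeV.vu h, DLEdgeV.vv h⟩

/-- common out-neighbor of `u j` and `v j` -/
private lemma exists_X (ℓ j : ℕ) (h : j ≤ ℓ) :
    ∃ x : DLVert ℓ, DLEdge ℓ (DLu ℓ j h) x ∧ DLEdge ℓ (DLv ℓ j h) x := by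
  rcases lt_or_eq_of_le h with hlt | rfl
  · exact ⟨DLu ℓ (j + 1) hlt, DLEdgeV.uu hlt, DLEdgeV.vu hlt⟩
  · exact ⟨DLt1 j, DLEdgeV.ut1, DLEdgeV.vt1⟩

/-- common out-neighbor of `v j` and `w j` -/
private lemma exists_Z (ℓ j : ℕ) (h : j ≤ ℓ) :
    ∃ z : DLVert ℓ, DLEdge ℓ (DLv ℓ j h) z ∧ DLEdge ℓ (DLw ℓ j h) z := by
  rcases lt_or_eq_of_le h with hlt | rfl
  · exact ⟨DLv ℓ (j + 1) hlt, DLEdgeV.vv hlt, DLEdgeV.wv hlt⟩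
  · exact ⟨DLt2 j, DLEdgeV.vt2, DLEdgeV.wt2⟩

end Aux

/-- in every 2-page book embedding of the double ladder of length
`ℓ`, no index `i < ℓ` has both triples `i` and `i+1` ordered `u < v < w` in the
spine order, and no index `i < ℓ` has both triples ordered `w < v < u`. -/
theorem doubleLadder_no_repeated_orientation (ℓ : ℕ)
    (emb : TwoPageEmbedding (DLVert ℓ) (DLEdge ℓ)) :
    ∀ i : ℕ, ∀ h : i < ℓ,
      ¬ (emb.pos (DLu ℓ i h.le) < emb.pos (DLv ℓ i h.le) ∧
         emb.pos (DLv ℓ i h.le) < emb.pos (DLw ℓ i h.le) ∧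
         emb.pos (DLu ℓ (i + 1) h) < emb.pos (DLv ℓ (i + 1) h) ∧
         emb.pos (DLv ℓ (i + 1) h) < emb.pos (DLw ℓ (i + 1) h)) ∧
      ¬ (emb.pos (DLw ℓ i h.le) < emb.pos (DLv ℓ i h.le) ∧
         emb.pos (DLv ℓ i h.le) < emb.pos (DLu ℓ i h.le) ∧
         emb.pos (DLw ℓ (i + 1) h) < emb.pos (DLv ℓ (i + 1) h) ∧
         emb.pos (DLv ℓ (i + 1) h) < emb.pos (DLu ℓ (i + 1) h)) := by
  intro i h
  -- the vertices of the two rungs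
  set ui := DLu ℓ i h.le with hui
  set vi := DLv ℓ i h.le with hvi
  set wi := DLw ℓ i h.le with hwi
  set ui1 := DLu ℓ (i + 1) h with hui1
  set vi1 := DLv ℓ (i + 1) h with hvi1
  set wi1 := DLw ℓ (i + 1) h with hwi1
  -- the ladder edges between the two rungs
  have euu : DLEdge ℓ ui ui1 := DLEdgeV.uu h
  have evu : DLEdge ℓ vi ui1 := DLEdgeV.vu h
  have evv : DLEdge ℓ vi vi1 := DLEdgeV.vv h
  have ewv : DLEdge ℓ wi vi1 := DLEdgeV.wv h
  have eww : DLEdge ℓ wi wi1 := DLEdgeV.ww h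
  have hvu : emb.pos vi < emb.pos ui1 := emb.topo evu
  have hwv : emb.pos wi < emb.pos vi1 := emb.topo ewv
  have hvvp : emb.pos vi < emb.pos vi1 := emb.topo evv
  have huup : emb.pos ui < emb.pos ui1 := emb.topo euu
  have hwwp : emb.pos wi < emb.pos wi1 := emb.topo eww
  obtain ⟨p, hpv, hpw⟩ := exists_P ℓ i h.le
  obtain ⟨p', hp'u, hp'v⟩ := exists_P' ℓ i h.le
  obtain ⟨x, hux, hvx⟩ := exists_X ℓ (i + 1) h
  obtain ⟨z, hvz, hwz⟩ := exists_Z ℓ (i + 1) h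
  have hPv : emb.pos p < emb.pos vi := emb.topo hpv
  have hPw : emb.pos p < emb.pos wi := emb.topo hpw
  have hP'v : emb.pos p' < emb.pos vi := emb.topo hp'v
  have hX : emb.pos vi1 < emb.pos x := emb.topo hvx
  have hZ : emb.pos vi1 < emb.pos z := emb.topo hvz
  constructor
  · -- orientation u < v < w on both rungs
    rintro ⟨h1, h2, h3, h4⟩
    have hne : emb.pos ui1 ≠ emb.pos wi := pos_ne emb (by simp [hui1, hwi, DLu, DLw])
    rcases hne.lt_or_gt with hc | hc
    · -- u_{i+1} < w_i : triangle (p,w_i), (v_i,v_{i+1}), (u_{i+1},x)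
      exact bool3
        (cross_ne emb hpw evv hPv h2 hwv)
        (cross_ne emb evv hux hvu h3 hX)
        (cross_ne emb hpw hux (hPv.trans hvu) hc (hwv.trans hX))
    · -- w_i < u_{i+1} : triangle (u_i,u_{i+1}), (v_i,v_{i+1}), (w_i,w_{i+1})
      exact bool3
        (cross_ne emb euu evv h1 hvu h3)
        (cross_ne emb evv eww h2 hwv h4)
        (cross_ne emb euu eww (h1.trans h2) hc (h3.trans h4))
  · -- orientation w < v < u on both rungs
    rintro ⟨h1, h2, h3, h4⟩
    have hne : emb.pos ui ≠ emb.pos vi1 := pos_ne emb (by simp [hui, hvi1, DLu, DLv])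
    rcases hne.lt_or_gt with hc | hc
    · -- u_i < v_{i+1} : 5-cycle (v_i,u_{i+1}), (p',u_i), (v_i,v_{i+1}),
      --                         (u_i,u_{i+1}), (w_i,v_{i+1})
      exact bool5
        (cross_ne emb hp'u evu hP'v h2 huup).symm
        (cross_ne emb hp'u evv hP'v h2 hc)
        (cross_ne emb evv euu h2 hc h4)
        (cross_ne emb ewv euu (h1.trans h2) hc h4).symm
        (cross_ne emb ewv evu h1 hvvp h4)
    · -- v_{i+1} < u_i
      have hne2 : emb.pos vi ≠ emb.pos wi1 := pos_ne emb (by simp [hvi, hwi1, DLv, DLw])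
      rcases hne2.lt_or_gt with hd | hd
      · -- v_i < w_{i+1} : 5-cycle (w_i,v_{i+1}), (p,v_i), (w_i,w_{i+1}),
        --                          (v_i,v_{i+1}), (w_{i+1},z)
        exact bool5
          (cross_ne emb hpv ewv hPw h1 hvvp).symm
          (cross_ne emb hpv eww hPw h1 hd)
          (cross_ne emb eww evv h1 hd h3)
          (cross_ne emb evv hwz hd h3 hZ)
          (cross_ne emb ewv hwz hwwp h3 hZ).symm
      · -- w_{i+1} < v_i : triangle (p,v_i), (w_i,v_{i+1}), (w_{i+1},z)
        exact bool3
          (cross_ne emb hpv ewv hPw h1 hvvp)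
          (cross_ne emb ewv hwz hwwp h3 hZ)
          (cross_ne emb hpv hwz (hPw.trans hwwp) hd (hvvp.trans hZ))
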